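/- For every integer n ≥ 6, there exists a sequence a_1, a_2, ..., a_n listing each integer of {1,...,n} exactly once, with a_1 = 1, a_n = 2, and |a_i - a_{i+1}| prime for all 1 ≤ i ≤ n-1. -/

import Mathlib

open List

private def PD (x y : ℤ) : Prop := ((x - y).natAbs).Prime

private def Ok (n : ℕ) (l : List ℤ) : Prop :=
  l.Chain' PD ∧ l.Nodup ∧ (∀ x ∈ l, 1 ≤ x ∧ x ≤ (n : ℤ)) ∧ l.length = n ∧
  l.head? = some 1 ∧ l.getLast? = some 2 ∧
  ∃ l1 l2 : List ℤ,
    l = l1 ++ ((n : ℤ) - 2) :: (n : ℤ) :: l2 ∨ l = l1 ++ (n : ℤ) :: ((n : ℤ) - 2) :: l2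

private lemma chain_splice {a b : ℤ} {l1 l2 m : List ℤ}
    (hc : Chain' PD (l1 ++ a :: b :: l2)) (hm : Chain' PD (a :: (m ++ [b]))) :
    Chain' PD (l1 ++ a :: (m ++ b :: l2)) := by
  simp only [Chain'] at hc hm ⊢
  rw [isChain_split] at hc ⊢
  refine ⟨hc.1, ?_⟩
  have h2 := hc.2
  have he : a :: (m ++ b :: l2) = (a :: m) ++ b :: l2 := by simp
  rw [he, isChain_split]
  constructor
  · simpa using hm
  · have he2 : a :: b :: l2 = [a] ++ b :: l2 := rfl
    rw [he2, isChain_split] at h2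
    exact h2.2

private lemma perm_splice (a b : ℤ) (l1 l2 m : List ℤ) :
    (l1 ++ a :: (m ++ b :: l2)).Perm ((l1 ++ a :: b :: l2) ++ m) := by
  have h1 : (a :: (m ++ b :: l2)).Perm ((a :: b :: l2) ++ m) :=
    (List.perm_append_comm (l₁ := m) (l₂ := b :: l2)).cons a
  calc (l1 ++ a :: (m ++ b :: l2)).Perm (l1 ++ ((a :: b :: l2) ++ m)) := h1.append_left l1
    _ = (l1 ++ a :: b :: l2) ++ m := (List.append_assoc _ _ _).symm

example : True := trivial

private lemma pd (x y : ℤ)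
    (h : (x - y).natAbs = 2 ∨ (x - y).natAbs = 3 ∨ (x - y).natAbs = 5) : PD x y := by
  rcases h with h | h | h <;> rw [PD, h] <;> norm_num

private lemma ok_core (n : ℕ) (l1 l2 : List ℤ) (a b : ℤ) (m : List ℤ)
    (hOk : Ok n (l1 ++ a :: b :: l2))
    (hm : Chain' PD (a :: (m ++ [b])))
    (hmn : m.Nodup)
    (hmb : ∀ x ∈ m, (n : ℤ) + 1 ≤ x ∧ x ≤ (n : ℤ) + 4)
    (hml : m.length = 4)
    (hadj : ∃ L1 L2 : List ℤ,
        l1 ++ a :: (m ++ b :: l2) = L1 ++ ((n : ℤ) + 2) :: ((n : ℤ) + 4) :: L2 ∨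
        l1 ++ a :: (m ++ b :: l2) = L1 ++ ((n : ℤ) + 4) :: ((n : ℤ) + 2) :: L2) :
    Ok (n + 4) (l1 ++ a :: (m ++ b :: l2)) := by
  obtain ⟨hc, hnd, hb, hl, hh, hg, -⟩ := hOk
  have hp := perm_splice a b l1 l2 m
  refine ⟨chain_splice hc hm, ?_, ?_, ?_, ?_, ?_, ?_⟩
  · -- Nodup
    rw [hp.nodup_iff, nodup_append]
    refine ⟨hnd, hmn, fun x hx y hxm => ?_⟩
    have h1 := (hb x hx).2
    have h2 := (hmb y hxm).1
    omega
  · -- bounds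
    intro x hx
    rw [hp.mem_iff, mem_append] at hx
    push_cast
    rcases hx with hx | hx
    · have := hb x hx; constructor <;> linarith [this.1, this.2]
    · have := hmb x hx; constructor <;> linarith [this.1, this.2]
  · -- length
    rw [hp.length_eq, length_append, hl, hml]
  · -- head?
    rw [head?_append, head?_cons]
    rw [head?_append, head?_cons] at hh
    exact hh
  · -- getLast?
    have hgl : (b :: l2).getLast? = some ((b :: l2).getLast (by simp)) :=
      getLast?_eq_getLast _
    have e1 : (l1 ++ a :: b :: l2).getLast? = (b :: l2).getLast? := by
      rw [show l1 ++ a :: b :: l2 = (l1 ++ [a]) ++ b :: l2 by simp, getLast?_append, hgl]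
      rfl
    have e2 : (l1 ++ a :: (m ++ b :: l2)).getLast? = (b :: l2).getLast? := by
      rw [show l1 ++ a :: (m ++ b :: l2) = (l1 ++ a :: m) ++ b :: l2 by simp,
        getLast?_append, hgl]
      rfl
    rw [e2, ← e1, hg]
  · -- adjacency
    obtain ⟨L1, L2, h⟩ := hadj
    refine ⟨L1, L2, ?_⟩
    push_cast
    rcases h with h | h
    · left; rw [h]; ring_nf
    · right; rw [h]; ring_nf

example : True := trivial

private lemma ok_step {n : ℕ} (hn : 6 ≤ n) {l : List ℤ} (h : Ok n l) :
    ∃ l', Ok (n + 4) l' := by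
  obtain ⟨l1, l2, hsp⟩ := h.2.2.2.2.2.2
  set N : ℤ := (n : ℤ) with hN
  rcases hsp with hsp | hsp
  · refine ⟨l1 ++ (N - 2) :: ([N + 3, N + 1, N + 4, N + 2] ++ N :: l2), ?_⟩
    rw [hsp] at h
    clear hsp
    refine ok_core n l1 l2 (N - 2) N _ h ?_ ?_ ?_ (by simp) ?_
    · simp only [Chain', cons_append, nil_append, isChain_cons_cons, isChain_singleton, and_true]
      exact ⟨pd _ _ (by omega), pd _ _ (by omega), pd _ _ (by omega),
        pd _ _ (by omega), pd _ _ (by omega)⟩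
    · simp only [nodup_cons, mem_cons, mem_singleton, not_mem_nil, or_false, nodup_nil,
        and_true, not_or, not_false_eq_true]
      omega
    · intro x hx
      simp only [mem_cons, mem_singleton, not_mem_nil, or_false] at hx
      rcases hx with rfl | rfl | rfl | rfl <;> omega
    · exact ⟨l1 ++ [N - 2, N + 3, N + 1], N :: l2, Or.inr (by simp; exact hN)⟩
  · refine ⟨l1 ++ N :: ([N + 2, N + 4, N + 1, N + 3] ++ (N - 2) :: l2), ?_⟩
    rw [hsp] at h
    clear hsp
    refine ok_core n l1 l2 N (N - 2) _ h ?_ ?_ ?_ (by simp) ?_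
    · simp only [Chain', cons_append, nil_append, isChain_cons_cons, isChain_singleton, and_true]
      exact ⟨pd _ _ (by omega), pd _ _ (by omega), pd _ _ (by omega),
        pd _ _ (by omega), pd _ _ (by omega)⟩
    · simp only [nodup_cons, mem_cons, mem_singleton, not_mem_nil, or_false, nodup_nil,
        and_true, not_or, not_false_eq_true]
      omega
    · intro x hx
      simp only [mem_cons, mem_singleton, not_mem_nil, or_false] at hx
      rcases hx with rfl | rfl | rfl | rfl <;> omega
    · exact ⟨l1 ++ [N], (N + 1) :: (N + 3) :: (N - 2) :: l2, Or.inl (by simp; exact hN)⟩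

example : True := trivial

private lemma chain_of_list {l : List ℤ} (h : l.Chain' (fun x y => ((x - y).natAbs).Prime)) :
    l.Chain' PD := h

private lemma ok_base (n : ℕ) (hn : 6 ≤ n) (hn9 : n ≤ 9) : ∃ l, Ok n l := by
  interval_cases n
  · exact ⟨[1, 4, 6, 3, 5, 2],
      chain_of_list (by simp [Chain', List.isChain_cons_cons]; norm_num), by decide, by decide, by decide,
      by decide, by decide, [1], [3, 5, 2], Or.inl (by norm_num)⟩
  · exact ⟨[1, 3, 6, 4, 7, 5, 2],
      chain_of_list (by simp [Chain', List.isChain_cons_cons]; norm_num), by decide, by decide, by decide,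
      by decide, by decide, [1, 3, 6, 4], [2], Or.inr (by norm_num)⟩
  · exact ⟨[1, 3, 6, 8, 5, 7, 4, 2],
      chain_of_list (by simp [Chain', List.isChain_cons_cons]; norm_num), by decide, by decide, by decide,
      by decide, by decide, [1, 3], [5, 7, 4, 2], Or.inl (by norm_num)⟩
  · exact ⟨[1, 3, 6, 8, 5, 7, 9, 4, 2],
      chain_of_list (by simp [Chain', List.isChain_cons_cons]; norm_num), by decide, by decide, by decide,
      by decide, by decide, [1, 3, 6, 8, 5], [4, 2], Or.inl (by norm_num)⟩

private lemma ok_exists : ∀ n : ℕ, 6 ≤ n → ∃ l, Ok n l := by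
  intro n
  induction n using Nat.strong_induction_on with
  | _ n ih =>
    intro hn
    by_cases h9 : n ≤ 9
    · exact ok_base n hn h9
    · push_neg at h9
      obtain ⟨l, hl⟩ := ih (n - 4) (by omega) (by omega)
      obtain ⟨l', hl'⟩ := ok_step (by omega : 6 ≤ n - 4) hl
      rw [show n - 4 + 4 = n by omega] at hl'
      exact ⟨l', hl'⟩

/-- `a 0, ..., a (n-1)` is a Hamilton path of `{1,...,n}` with all consecutive
absolute differences prime. -/
def IsPrimeDiffHamPath (n : ℕ) (a : ℕ → ℤ) : Prop :=
  Set.BijOn a (Set.Ico 0 n) (Set.Icc 1 (n : ℤ)) ∧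
  (∀ i, i + 1 < n → ((a i - a (i + 1)).natAbs).Prime)

theorem prime_diff_ham_path_one_two (n : ℕ) (hn : 6 ≤ n) :
    ∃ a : ℕ → ℤ, IsPrimeDiffHamPath n a ∧ a 0 = 1 ∧ a (n - 1) = 2 := by
  obtain ⟨l, hc, hnd, hb, hlen, hh, hg, -⟩ := ok_exists n hn
  have hn0 : 0 < n := by omega
  refine ⟨fun i => l.getD i 0, ⟨?_, ?_⟩, ?_, ?_⟩
  · -- BijOn
    have hFin : l.toFinset = Finset.Icc (1 : ℤ) n := by
      apply Finset.eq_of_subset_of_card_le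
      · intro x hx
        rw [List.mem_toFinset] at hx
        rw [Finset.mem_Icc]
        exact hb x hx
      · rw [Int.card_Icc, List.toFinset_card_of_nodup hnd, hlen]
        simp
    refine ⟨?_, ?_, ?_⟩
    · -- MapsTo
      intro i hi
      simp only [Set.mem_Ico] at hi
      have hi' : i < l.length := by omega
      show l.getD i 0 ∈ Set.Icc 1 (n : ℤ)
      rw [List.getD_eq_getElem l 0 hi', Set.mem_Icc]
      exact hb _ (List.getElem_mem hi')
    · -- InjOn
      intro i hi j hj hij
      simp only [Set.mem_Ico] at hi hj
      have hi' : i < l.length := by omega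
      have hj' : j < l.length := by omega
      simp only [List.getD_eq_getElem l 0 hi', List.getD_eq_getElem l 0 hj'] at hij
      have := (List.Nodup.get_inj_iff hnd (i := ⟨i, hi'⟩) (j := ⟨j, hj'⟩)).mp
        (by simpa [List.get_eq_getElem] using hij)
      exact congrArg Fin.val this
    · -- SurjOn
      intro x hx
      rw [Set.mem_Icc] at hx
      have hxl : x ∈ l := by
        rw [← List.mem_toFinset, hFin, Finset.mem_Icc]
        exact hx
      obtain ⟨⟨i, hi⟩, hget⟩ := List.mem_iff_get.mp hxl
      refine ⟨i, Set.mem_Ico.mpr ⟨Nat.zero_le _, by omega⟩, ?_⟩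
      show l.getD i 0 = x
      rw [List.getD_eq_getElem l 0 hi]
      simpa [List.get_eq_getElem] using hget
  · -- prime differences
    intro i hi
    have h2 : i < l.length - 1 := by omega
    have hp := List.isChain_iff_getElem.mp hc i (by omega)
    have hi1 : i < l.length := by omega
    have hi2 : i + 1 < l.length := by omega
    simp only [List.getD_eq_getElem l 0 hi1, List.getD_eq_getElem l 0 hi2]
    simpa [PD, List.get_eq_getElem] using hp
  · -- a 0 = 1
    cases l with
    | nil => simp at hh
    | cons x t =>
      simp only [List.head?_cons, Option.some.injEq] at hh
      simp [hh]
  · -- a (n-1) = 2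
    have : l.getLast? = l[l.length - 1]? := List.getLast?_eq_getElem?
    rw [hg, hlen] at this
    show l.getD (n - 1) 0 = 2
    rw [List.getD_eq_getElem?_getD, ← this]
    rfl
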